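/- Let E be a continuous strongly T-ergodic sublinear expectation on (Ω, B_b(Ω)) such that for every d ∈ ℕ the set of extreme points of Θ^{(d)} is a finite set of pairwise mutually singular probabilities, with Θ^{(d)} ⊆ Θ^{(l)} whenever d | l, and suppose there is no d with Θ^{(l)} ⊆ Θ^{(d)} for all l. Then there exists a strictly increasing divisibility chain n_1 | n_2 | … with card(ext Θ^{(n_k)}) strictly increasing, yielding infinitely many pairwise disjoint sets of upper probability 1, contradicting continuity of E. Hence there exists d ∈ ℕ such that Θ^{(l)} ⊆ Θ^{(d)} for all l ∈ ℕ. -/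

import Mathlib

open MeasureTheory Filter Function Topology

structure IsHSpace {Ω : Type*} (T : Ω → Ω) (H : Set (Ω → ℝ)) : Prop where
  add_mem : ∀ f ∈ H, ∀ g ∈ H, f + g ∈ H
  smul_mem : ∀ (c : ℝ), ∀ f ∈ H, c • f ∈ H
  one_mem : (fun _ : Ω => (1 : ℝ)) ∈ H
  comp_mem : ∀ f ∈ H, f ∘ T ∈ H
  abs_mem : ∀ f ∈ H, (fun ω => |f ω|) ∈ H

/-- `E` is a `T`-invariant sublinear expectation on `(Ω, H)`. -/
structure IsISE {Ω : Type*} (T : Ω → Ω) (H : Set (Ω → ℝ)) (E : (Ω → ℝ) → ℝ) : Prop where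
  mono : ∀ f ∈ H, ∀ g ∈ H, (∀ ω, f ω ≤ g ω) → E f ≤ E g
  const : ∀ c : ℝ, E (fun _ => c) = c
  subadd : ∀ f ∈ H, ∀ g ∈ H, E (f + g) ≤ E f + E g
  homog : ∀ f ∈ H, ∀ c : ℝ, 0 ≤ c → E (c • f) = c * E f
  inv : ∀ f ∈ H, E (f ∘ T) = E f

/-- The Birkhoff-type sum `∑_{k=0}^{n-1} f ∘ T^{kd}`. -/
def bsum {Ω : Type*} (T : Ω → Ω) (d : ℕ) (f : Ω → ℝ) (n : ℕ) : Ω → ℝ :=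
  fun ω => ∑ k ∈ Finset.range n, f (T^[k * d] ω)

open NNReal

/-- The space of bounded measurable real functions on `Ω`. -/
def Bb (Ω : Type*) [MeasurableSpace Ω] : Set (Ω → ℝ) :=
  {f | Measurable f ∧ ∃ C, ∀ ω, |f ω| ≤ C}

section AuxStmt15
variable {Ω : Type*} [MeasurableSpace Ω]

lemma aux_sum_ms {ι : Type*} [Fintype ι] (α : ι → ℝ≥0) (P : ι → Measure Ω) (ν : Measure Ω)
    (h : ∀ i, α i ≠ 0 → P i ⟂ₘ ν) : (∑ i, α i • P i) ⟂ₘ ν := by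
  classical
  refine Finset.sum_induction _ (fun μ => μ ⟂ₘ ν) (fun a b ha hb => ha.add_left hb)
    Measure.MutuallySingular.zero_left (fun i _ => ?_)
  by_cases hi : α i = 0
  · simp [hi]
  · exact (h i hi).smul_nnreal _

lemma aux_component_ac {ι : Type*} [Fintype ι] (α : ι → ℝ≥0) (P : ι → Measure Ω) (j : ι)
    (hj : α j ≠ 0) : P j ≪ ∑ i, α i • P i := by
  refine Measure.AbsolutelyContinuous.mk (fun s hs h0 => ?_)
  classical
  rw [Measure.coe_finset_sum, Finset.sum_apply] at h0
  have := (Finset.sum_eq_zero_iff.mp h0) j (Finset.mem_univ j)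
  rw [Measure.smul_apply, ENNReal.smul_def, smul_eq_mul] at this
  rcases mul_eq_zero.mp this with h | h
  · exact absurd (by exact_mod_cast h) hj
  · exact h

lemma aux_self_ms {μ : Measure Ω} (h : μ ⟂ₘ μ) : μ = 0 := by
  obtain ⟨s, hs, h1, h2⟩ := h
  have : μ Set.univ = 0 := by
    have := measure_union_le (μ := μ) s sᶜ
    rw [Set.union_compl_self, h1, h2, add_zero] at this
    exact le_antisymm this (by simp)
  exact Measure.measure_univ_eq_zero.mp this

lemma aux_supp_disjoint {M : ℕ} (P₁ P₂ : Measure Ω) (R : Fin M → Measure Ω)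
    (hR0 : ∀ j, R j ≠ 0)
    (α β : Fin M → ℝ≥0) (h1 : P₁ = ∑ i, α i • R i) (h2 : P₂ = ∑ i, β i • R i)
    (hsing : P₁ ⟂ₘ P₂) (j : Fin M) (hα : α j ≠ 0) (hβ : β j ≠ 0) : False := by
  have hac1 : R j ≪ P₁ := h1 ▸ aux_component_ac α R j hα
  have hac2 : R j ≪ P₂ := h2 ▸ aux_component_ac β R j hβ
  exact hR0 j (aux_self_ms (hsing.mono_ac hac1 hac2))

lemma aux_exists_seq_of_snoc {X : Type*} (P : ∀ m : ℕ, (Fin m → X) → Prop)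
    (h0 : P 0 (fun i => i.elim0)) (hstep : ∀ m Q, P m Q → ∃ x, P (m + 1) (Fin.snoc Q x)) :
    ∃ f : ℕ → X, ∀ m, P m (fun i : Fin m => f i) := by
  classical
  let g : ∀ m, {Q : Fin m → X // P m Q} :=
    fun m => Nat.rec ⟨fun i => i.elim0, h0⟩
      (fun m ih => ⟨Fin.snoc ih.1 (hstep m ih.1 ih.2).choose, (hstep m ih.1 ih.2).choose_spec⟩) m
  have hg : ∀ m, (g (m + 1)).1 = Fin.snoc (g m).1 (hstep m (g m).1 (g m).2).choose := fun m => rfl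
  set f : ℕ → X := fun n => (g (n + 1)).1 (Fin.last n) with hf
  have key : ∀ m (i : Fin m), (g m).1 i = f i := by
    intro m
    induction m with
    | zero => exact fun i => i.elim0
    | succ m ih =>
      intro i
      rcases Fin.eq_castSucc_or_eq_last i with ⟨i', rfl⟩ | rfl
      · rw [hg m, Fin.snoc_castSucc]
        simpa using ih i'
      · simp [hf]
  refine ⟨f, fun m => ?_⟩
  have : (fun i : Fin m => f i) = (g m).1 := by
    funext i
    exact (key m i).symm
  rw [this]; exact (g m).2

open scoped Classical in
lemma aux_good_card_le {N M m : ℕ} (P : Fin N → Measure Ω) (R : Fin M → Measure Ω)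
    (hPp : Pairwise fun i j => P i ⟂ₘ P j) (hR0 : ∀ j, R j ≠ 0)
    (hdec : ∀ i, ∃ α : Fin M → ℝ≥0, (∑ j, α j) = 1 ∧ P i = ∑ j, α j • R j)
    (Qh : Fin m → Measure Ω) :
    (Finset.univ.filter fun i => ∀ t, P i ⟂ₘ Qh t).card ≤
      (Finset.univ.filter fun j => ∀ t, R j ⟂ₘ Qh t).card := by
  choose α hα1 hα2 using hdec
  have hne : ∀ i, ∃ j, α i j ≠ 0 := by
    intro i
    by_contra h
    push_neg at h
    have h1 := hα1 i
    rw [Finset.sum_eq_zero (fun j _ => h j)] at h1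
    exact one_ne_zero h1.symm
  choose rep hrep using hne
  refine Finset.card_le_card_of_injOn rep ?_ ?_
  · intro i hi
    simp only [Finset.mem_coe, Finset.mem_filter, Finset.mem_univ, true_and] at hi ⊢
    intro t
    exact ((hi t).symm.mono_ac Measure.AbsolutelyContinuous.rfl
      (hα2 i ▸ aux_component_ac (α i) R (rep i) (hrep i))).symm
  · intro i _ i' hi' he
    by_contra hii
    exact aux_supp_disjoint (P i) (P i') R hR0
      (α i) (α i') (hα2 i) (hα2 i') (hPp hii) (rep i) (hrep i) (he ▸ hrep i')

lemma aux_simplex_subset {N M : ℕ} (P : Fin N → Measure Ω) (R : Fin M → Measure Ω)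
    (hR0 : ∀ j, R j ≠ 0)
    (hPp : Pairwise fun i j => P i ⟂ₘ P j)
    (hdec : ∀ i, ∃ α : Fin M → ℝ≥0, (∑ j, α j) = 1 ∧ P i = ∑ j, α j • R j)
    (hMN : M ≤ N) (Q : Measure Ω)
    (hQ : ∃ β : Fin M → ℝ≥0, (∑ j, β j) = 1 ∧ Q = ∑ j, β j • R j) :
    ∃ γ : Fin N → ℝ≥0, (∑ i, γ i) = 1 ∧ Q = ∑ i, γ i • P i := by
  classical
  choose α hα1 hα2 using hdec
  set supp : Fin N → Finset (Fin M) := fun i => Finset.univ.filter (fun j => α i j ≠ 0) with hsupp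
  have hmem : ∀ i j, j ∈ supp i ↔ α i j ≠ 0 := by
    intro i j; simp [hsupp]
  have hne : ∀ i, (supp i).Nonempty := by
    intro i
    by_contra h
    rw [Finset.not_nonempty_iff_eq_empty] at h
    have h1 := hα1 i
    rw [Finset.sum_eq_zero (fun j _ => by
      by_contra hc
      exact absurd ((hmem i j).mpr hc) (by simp [h]))] at h1
    exact one_ne_zero h1.symm
  have hdisj : ∀ i i', i ≠ i' → Disjoint (supp i) (supp i') := by
    intro i i' hii
    rw [Finset.disjoint_left]
    intro j hj hj'
    exact aux_supp_disjoint (P i) (P i') R hR0 (α i) (α i')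
      (hα2 i) (hα2 i') (hPp hii) j ((hmem i j).mp hj) ((hmem i' j).mp hj')
  have hcard1 : ∀ i, 1 ≤ (supp i).card := fun i => Finset.card_pos.mpr (hne i)
  have hsum_le : ∑ i, (supp i).card = (Finset.univ.biUnion supp).card :=
    (Finset.card_biUnion (fun i _ i' _ h => hdisj i i' h)).symm
  have hNle : N ≤ ∑ i : Fin N, (supp i).card := by
    calc N = ∑ _i : Fin N, 1 := by simp
    _ ≤ _ := Finset.sum_le_sum (fun i _ => hcard1 i)
  have hle2 : (Finset.univ.biUnion supp).card ≤ M := by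
    simpa using Finset.card_le_card (Finset.subset_univ (Finset.univ.biUnion supp))
  have hb : ∑ i, (supp i).card ≤ N := by rw [hsum_le]; exact hle2.trans hMN
  have hsum_eq : ∑ i, (supp i).card = N := le_antisymm hb hNle
  have hNM : N = M := le_antisymm (hNle.trans (by rw [hsum_le]; exact hle2)) hMN
  have hcards : ∀ i, (supp i).card = 1 := by
    intro i₀
    have hsplit := Finset.add_sum_erase Finset.univ (fun i => (supp i).card) (Finset.mem_univ i₀)
    rw [hsum_eq] at hsplit
    have hsplit' : (supp i₀).card + ∑ i ∈ Finset.univ.erase i₀, (supp i).card = N := hsplit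
    have herle : (Finset.univ.erase i₀ : Finset (Fin N)).card
        ≤ ∑ i ∈ Finset.univ.erase i₀, (supp i).card := by
      calc (Finset.univ.erase i₀ : Finset (Fin N)).card
          = ∑ _i ∈ Finset.univ.erase i₀, 1 := by simp
      _ ≤ _ := Finset.sum_le_sum (fun i _ => hcard1 i)
    have hec : (Finset.univ.erase i₀ : Finset (Fin N)).card = N - 1 := by
      rw [Finset.card_erase_of_mem (Finset.mem_univ i₀)]; simp
    have := hcard1 i₀
    omega
  have hcover : Finset.univ.biUnion supp = (Finset.univ : Finset (Fin M)) := by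
    apply Finset.eq_univ_of_card
    rw [← hsum_le, hsum_eq, hNM]
    simp
  -- extract σ
  have hsig : ∀ i, ∃ j, supp i = {j} := fun i => Finset.card_eq_one.mp (hcards i)
  choose σ hσ using hsig
  have hmemσ : ∀ i j, j ∈ supp i ↔ j = σ i := by
    intro i j; rw [hσ i]; simp
  have hα_one : ∀ i, α i (σ i) = 1 := by
    intro i
    have h1 := hα1 i
    rwa [Finset.sum_eq_single (σ i) (fun j _ hj => by
      by_contra hc
      exact hj ((hmemσ i j).mp ((hmem i j).mpr hc)))
      (fun h => absurd (Finset.mem_univ _) h)] at h1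
  have hPR : ∀ i, P i = R (σ i) := by
    intro i
    rw [hα2 i, Finset.sum_eq_single (σ i) (fun j _ hj => by
      have : α i j = 0 := by
        by_contra hc
        exact hj ((hmemσ i j).mp ((hmem i j).mpr hc))
      rw [this, zero_smul])
      (fun h => absurd (Finset.mem_univ _) h), hα_one i, one_smul]
  have hinj : Function.Injective σ := by
    intro i i' he
    by_contra hii
    exact (Finset.disjoint_left.mp (hdisj i i' hii))
      ((hmemσ i (σ i)).mpr rfl) ((hmemσ i' (σ i)).mpr he)
  have hbij : Function.Bijective σ := by
    rw [Fintype.bijective_iff_injective_and_card]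
    exact ⟨hinj, by simp [hNM]⟩
  obtain ⟨β, hβ1, hβ2⟩ := hQ
  refine ⟨fun i => β (σ i), ?_, ?_⟩
  · rw [← hβ1]
    exact hbij.sum_comp β
  · rw [hβ2, ← hbij.sum_comp (fun j => β j • R j)]
    exact Finset.sum_congr rfl (fun i _ => by rw [hPR i])

lemma aux_map_mul {T : Ω → Ω} (hT : Measurable T) (Q : Measure Ω) (a b : ℕ)
    (h : Measure.map (T^[a]) Q = Q) : Measure.map (T^[a * b]) Q = Q := by
  induction b with
  | zero => simp [Measure.map_id]
  | succ b ih =>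
    have he : T^[a * (b + 1)] = T^[a * b] ∘ T^[a] := by
      rw [Nat.mul_succ]; exact Function.iterate_add T (a * b) a
    rw [he, ← Measure.map_map (hT.iterate _) (hT.iterate _), h, ih]

lemma aux_snoc_pairwise {m : ℕ} (Qh : Fin m → Measure Ω) (Q' : Measure Ω)
    (h1 : Pairwise fun i j => Qh i ⟂ₘ Qh j) (h2 : ∀ t, Q' ⟂ₘ Qh t) :
    Pairwise fun i j => (Fin.snoc Qh Q' : Fin (m + 1) → Measure Ω) i ⟂ₘ
      (Fin.snoc Qh Q' : Fin (m + 1) → Measure Ω) j := by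
  intro i j hij
  rcases Fin.eq_castSucc_or_eq_last i with ⟨i', rfl⟩ | rfl <;>
    rcases Fin.eq_castSucc_or_eq_last j with ⟨j', rfl⟩ | rfl
  · rw [Fin.snoc_castSucc, Fin.snoc_castSucc]
    exact h1 (fun h => hij (by rw [h]))
  · rw [Fin.snoc_castSucc, Fin.snoc_last]
    exact (h2 i').symm
  · rw [Fin.snoc_castSucc, Fin.snoc_last]
    exact h2 j'
  · exact absurd rfl hij

def chainD (l : ℕ → ℕ) : ℕ → ℕ := fun k => Nat.rec 1 (fun _ dk => dk * l dk) k

lemma chainD_zero (l : ℕ → ℕ) : chainD l 0 = 1 := rfl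
lemma chainD_succ (l : ℕ → ℕ) (k : ℕ) : chainD l (k + 1) = chainD l k * l (chainD l k) := rfl
lemma chainD_pos (l : ℕ → ℕ) (hl : ∀ d, 0 < d → 0 < l d) (k : ℕ) : 0 < chainD l k := by
  induction k with
  | zero => exact one_pos
  | succ k ih => rw [chainD_succ]; exact mul_pos ih (hl _ ih)

end AuxStmt15

theorem stmt15 {Ω : Type*} [MeasurableSpace Ω] (T : Ω → Ω) (hT : Measurable T)
    (E : (Ω → ℝ) → ℝ) (hE : IsISE T (Bb Ω) E)
    (Θ : Set (Measure Ω))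
    (hΘ : Θ = {P | IsProbabilityMeasure P ∧ ∀ f ∈ Bb Ω, ∫ ω, f ω ∂P ≤ E f})
    -- continuity of `E`
    (hcont : ∀ A : ℕ → Set Ω, (∀ n, MeasurableSet (A n)) → Antitone A →
      (⋂ n, A n) = ∅ →
      Tendsto (fun n => ⨆ P : Θ, P.1 (A n)) atTop (𝓝 (0 : ENNReal)))
    -- strong ergodicity: each `Θ^{(d)}` is the convex hull of finitely many
    -- pairwise mutually singular (ergodic) probabilities
    (hext : ∀ d : ℕ, 0 < d → ∃ (nd : ℕ) (Pd : Fin nd → Measure Ω),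
      (∀ i, IsProbabilityMeasure (Pd i)) ∧
      (Pairwise fun i j => (Pd i).MutuallySingular (Pd j)) ∧
      {Q ∈ Θ | Measure.map (T^[d]) Q = Q} =
        {Q | ∃ α : Fin nd → ℝ≥0, (∑ i, α i) = 1 ∧ Q = ∑ i, α i • Pd i}) :
    ∃ d : ℕ, 0 < d ∧ ∀ l : ℕ, 0 < l →
      {Q ∈ Θ | Measure.map (T^[l]) Q = Q} ⊆ {Q ∈ Θ | Measure.map (T^[d]) Q = Q} := by
    classical
  have hΘ' : ∀ P ∈ Θ, IsProbabilityMeasure P := fun P hP => (hΘ ▸ hP).1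
  by_contra hcon
  push_neg at hcon
  choose! l hl hlns using hcon
  choose! nd Pd hprob hpair heq using hext
  set D := chainD l with hD
  have hDpos : ∀ k, 0 < D k := chainD_pos l hl
  -- membership of the family members
  have hmemfam : ∀ d, 0 < d → ∀ i, Pd d i ∈ {Q ∈ Θ | Measure.map (T^[d]) Q = Q} := by
    intro d hd i
    rw [heq d hd]
    refine ⟨fun j => if j = i then 1 else 0, ?_, ?_⟩
    · rw [Finset.sum_ite_eq' Finset.univ i (fun _ => (1 : ℝ≥0))]
      simp
    · rw [Finset.sum_eq_single i (fun j _ hj => by simp [hj])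
        (fun h => absurd (Finset.mem_univ i) h)]
      simp
  have hPd0 : ∀ d, 0 < d → ∀ i, Pd d i ≠ 0 := by
    intro d hd i
    haveI := hprob d hd i
    exact IsProbabilityMeasure.ne_zero _
  -- multiplication closure
  have hsub_mul : ∀ a b : ℕ, {Q ∈ Θ | Measure.map (T^[a]) Q = Q} ⊆
      {Q ∈ Θ | Measure.map (T^[a * b]) Q = Q} := by
    intro a b Q hQ
    exact ⟨hQ.1, aux_map_mul hT Q a b hQ.2⟩
  have hchain : ∀ k k' : ℕ, k ≤ k' → {Q ∈ Θ | Measure.map (T^[D k]) Q = Q} ⊆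
      {Q ∈ Θ | Measure.map (T^[D k']) Q = Q} := by
    intro k k' hkk
    induction k', hkk using Nat.le_induction with
    | base => exact subset_rfl
    | succ k' hkk ih =>
      refine ih.trans ?_
      have : D (k' + 1) = D k' * l (D k') := chainD_succ l k'
      rw [this]
      exact hsub_mul _ _
  have hdecomp : ∀ k k' : ℕ, k ≤ k' → ∀ i, ∃ α : Fin (nd (D k')) → ℝ≥0,
      (∑ j, α j) = 1 ∧ Pd (D k) i = ∑ j, α j • Pd (D k') j := by
    intro k k' hkk i
    have := hchain k k' hkk (hmemfam (D k) (hDpos k) i)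
    rwa [heq (D k') (hDpos k')] at this
  -- strict growth of the number of ergodic components
  have hstrict : ∀ k, nd (D k) < nd (D (k + 1)) := by
    intro k
    by_contra hle
    push_neg at hle
    have hsub : {Q ∈ Θ | Measure.map (T^[D (k+1)]) Q = Q} ⊆
        {Q ∈ Θ | Measure.map (T^[D k]) Q = Q} := by
      intro Q hQ
      rw [heq (D k) (hDpos k)]
      refine aux_simplex_subset (Pd (D k)) (Pd (D (k+1))) (hPd0 _ (hDpos (k+1)))
        (hpair _ (hDpos k)) (hdecomp k (k+1) (Nat.le_succ k)) hle Q ?_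
      rwa [heq (D (k+1)) (hDpos (k+1))] at hQ
    refine hlns (D k) (hDpos k) ?_
    intro Q hQ
    refine hsub ?_
    have : D (k + 1) = D k * l (D k) := chainD_succ l k
    rw [this, mul_comm]
    exact hsub_mul _ _ hQ
  have hSM : ∀ Nn : ℕ, Nn ≤ nd (D Nn) :=
    fun _ => (strictMono_nat_of_lt_succ hstrict).le_apply
  -- the harvesting step
  have hstep : ∀ (m : ℕ) (Qh : Fin m → Measure Ω),
      ((∀ i, Qh i ∈ Θ) ∧ (Pairwise fun i j => Qh i ⟂ₘ Qh j) ∧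
        ∀ Nn : ℕ, ∃ k : ℕ, Nn ≤ (Finset.univ.filter
          fun j : Fin (nd (D k)) => ∀ t, Pd (D k) j ⟂ₘ Qh t).card) →
      ∃ Q' : Measure Ω,
      ((∀ i, (Fin.snoc Qh Q' : Fin (m+1) → Measure Ω) i ∈ Θ) ∧
        (Pairwise fun i j => (Fin.snoc Qh Q' : Fin (m+1) → Measure Ω) i ⟂ₘ
          (Fin.snoc Qh Q' : Fin (m+1) → Measure Ω) j) ∧
        ∀ Nn : ℕ, ∃ k : ℕ, Nn ≤ (Finset.univ.filter
          fun j : Fin (nd (D k)) => ∀ t,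
            Pd (D k) j ⟂ₘ (Fin.snoc Qh Q' : Fin (m+1) → Measure Ω) t).card) := by
    rintro m Qh ⟨hQΘ, hQp, hUnb⟩
    have hgmono : ∀ (k k' : ℕ), k ≤ k' →
        (Finset.univ.filter fun j : Fin (nd (D k)) => ∀ t, Pd (D k) j ⟂ₘ Qh t).card ≤
        (Finset.univ.filter fun j : Fin (nd (D k')) => ∀ t, Pd (D k') j ⟂ₘ Qh t).card :=
      fun k k' hkk => aux_good_card_le (Pd (D k)) (Pd (D k')) (hpair _ (hDpos k))
        (hPd0 _ (hDpos k')) (hdecomp k k' hkk) Qh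
    obtain ⟨k₀, hk₀⟩ := hUnb 2
    obtain ⟨a, ha, b, hb, hab⟩ := Finset.one_lt_card.mp (lt_of_lt_of_le one_lt_two hk₀)
    rw [Finset.mem_filter] at ha hb
    have haΘ : Pd (D k₀) a ∈ Θ := (hmemfam _ (hDpos k₀) a).1
    have hbΘ : Pd (D k₀) b ∈ Θ := (hmemfam _ (hDpos k₀) b).1
    have hpab : Pd (D k₀) a ⟂ₘ Pd (D k₀) b := hpair _ (hDpos k₀) hab
    choose αA hA1 hA2 using fun t : ℕ => hdecomp k₀ (k₀ + t) (Nat.le_add_right _ _) a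
    by_cases hc : ∀ Nn : ℕ, ∃ t : ℕ, Nn ≤ (((Finset.univ.filter
        fun j : Fin (nd (D (k₀ + t))) => ∀ s, Pd (D (k₀ + t)) j ⟂ₘ Qh s)).filter
        fun j => αA t j ≠ 0).card
    · -- harvest `Pd (D k₀) b`
      refine ⟨Pd (D k₀) b, ?_, aux_snoc_pairwise Qh _ hQp hb.2, ?_⟩
      · intro i
        refine Fin.lastCases ?_ ?_ i
        · rw [Fin.snoc_last]; exact hbΘ
        · intro i'; rw [Fin.snoc_castSucc]; exact hQΘ i'
      · intro Nn
        obtain ⟨t, ht⟩ := hc Nn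
        refine ⟨k₀ + t, le_trans ht (Finset.card_le_card ?_)⟩
        intro j hj
        rw [Finset.mem_filter, Finset.mem_filter] at hj
        rw [Finset.mem_filter]
        refine ⟨Finset.mem_univ j, ?_⟩
        intro s
        refine Fin.lastCases ?_ ?_ s
        · rw [Fin.snoc_last]
          have hac : Pd (D (k₀ + t)) j ≪ Pd (D k₀) a :=
            (hA2 t) ▸ aux_component_ac (αA t) (Pd (D (k₀ + t))) j hj.2
          exact hpab.mono_ac hac Measure.AbsolutelyContinuous.rfl
        · intro s'; rw [Fin.snoc_castSucc]; exact hj.1.2 s'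
    · -- harvest `Pd (D k₀) a`
      push_neg at hc
      obtain ⟨N₀, hN₀⟩ := hc
      refine ⟨Pd (D k₀) a, ?_, aux_snoc_pairwise Qh _ hQp ha.2, ?_⟩
      · intro i
        refine Fin.lastCases ?_ ?_ i
        · rw [Fin.snoc_last]; exact haΘ
        · intro i'; rw [Fin.snoc_castSucc]; exact hQΘ i'
      · intro Nn
        obtain ⟨k₁, hk₁⟩ := hUnb (Nn + N₀)
        set t := max k₁ k₀ - k₀ with hts
        have hk₁le : k₁ ≤ k₀ + t := by omega
        have hbig : Nn + N₀ ≤ (Finset.univ.filter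
            fun j : Fin (nd (D (k₀ + t))) => ∀ s, Pd (D (k₀ + t)) j ⟂ₘ Qh s).card :=
          le_trans hk₁ (hgmono k₁ (k₀ + t) hk₁le)
        have hsplit := Finset.card_filter_add_card_filter_not
          (s := Finset.univ.filter
            fun j : Fin (nd (D (k₀ + t))) => ∀ s, Pd (D (k₀ + t)) j ⟂ₘ Qh s)
          (p := fun j => αA t j ≠ 0)
        have hrest : Nn ≤ (((Finset.univ.filter
            fun j : Fin (nd (D (k₀ + t))) => ∀ s, Pd (D (k₀ + t)) j ⟂ₘ Qh s)).filter
            fun j => ¬ αA t j ≠ 0).card := by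
          have := hN₀ t
          omega
        refine ⟨k₀ + t, le_trans hrest (Finset.card_le_card ?_)⟩
        intro j hj
        rw [Finset.mem_filter, Finset.mem_filter] at hj
        rw [Finset.mem_filter]
        refine ⟨Finset.mem_univ j, ?_⟩
        intro s
        refine Fin.lastCases ?_ ?_ s
        · rw [Fin.snoc_last]
          have : Pd (D k₀) a ⟂ₘ Pd (D (k₀ + t)) j := by
            rw [hA2 t]
            refine aux_sum_ms (αA t) (Pd (D (k₀ + t))) _ (fun i hi => ?_)
            refine hpair _ (hDpos (k₀ + t)) (fun he => ?_)
            rw [not_not] at hj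
            exact hi (he ▸ hj.2)
          exact this.symm
        · intro s'; rw [Fin.snoc_castSucc]; exact hj.1.2 s'
  -- build the infinite sequence of pairwise mutually singular measures in Θ
  obtain ⟨f, hf⟩ := aux_exists_seq_of_snoc
    (fun m Qh => (∀ i, Qh i ∈ Θ) ∧ (Pairwise fun i j => Qh i ⟂ₘ Qh j) ∧
      ∀ Nn : ℕ, ∃ k : ℕ, Nn ≤ (Finset.univ.filter
        fun j : Fin (nd (D k)) => ∀ t, Pd (D k) j ⟂ₘ Qh t).card)
    ⟨fun i => i.elim0, fun i => i.elim0, fun Nn => ⟨Nn, by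
      rw [Finset.filter_true_of_mem (fun j _ => fun t => t.elim0)]
      simpa using hSM Nn⟩⟩
    hstep
  have hfΘ : ∀ n : ℕ, f n ∈ Θ := by
    intro n
    have := (hf (n + 1)).1 (Fin.last n)
    simpa using this
  have hfsing : ∀ i j : ℕ, i ≠ j → f i ⟂ₘ f j := by
    intro i j hij
    have := (hf (max i j + 1)).2.1
      (i := ⟨i, by omega⟩) (j := ⟨j, by omega⟩)
      (fun h => hij (by simpa [Fin.ext_iff] using h))
    simpa using this
  -- disjoint carrier sets
  have hnsex : ∀ i j : ℕ, ∃ s : Set Ω, MeasurableSet s ∧ (i ≠ j → f i s = 0 ∧ f j sᶜ = 0) := by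
    intro i j
    by_cases h : i ≠ j
    · exact ⟨(hfsing i j h).nullSet, (hfsing i j h).measurableSet_nullSet,
        fun _ => ⟨(hfsing i j h).measure_nullSet, (hfsing i j h).measure_compl_nullSet⟩⟩
    · exact ⟨∅, MeasurableSet.empty, fun h' => absurd h' h⟩
  choose ns hnsm hnsp using hnsex
  set C : ℕ → Set Ω := fun i => ⋂ j, if i = j then Set.univ else ((ns i j)ᶜ ∩ ns j i)
    with hCdef
  have hCmeas : ∀ i, MeasurableSet (C i) := by
    intro i
    simp only [hCdef]
    refine MeasurableSet.iInter (fun j => ?_)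
    split_ifs with h
    · exact MeasurableSet.univ
    · exact (hnsm i j).compl.inter (hnsm j i)
  have hCdisj : ∀ i j : ℕ, i ≠ j → ∀ x, x ∈ C i → x ∈ C j → False := by
    intro i j hij x hxi hxj
    simp only [hCdef, Set.mem_iInter] at hxi hxj
    have h1 := hxi j
    rw [if_neg hij] at h1
    have h2 := hxj i
    rw [if_neg (Ne.symm hij)] at h2
    exact h2.1 h1.2
  have hCfull : ∀ i, f i (C i) = 1 := by
    intro i
    haveI : IsProbabilityMeasure (f i) := hΘ' _ (hfΘ i)
    have hcompl : f i ((C i)ᶜ) = 0 := by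
      simp only [hCdef, Set.compl_iInter]
      refine measure_iUnion_null (fun j => ?_)
      by_cases h : i = j
      · simp [h]
      · rw [if_neg h, Set.compl_inter, compl_compl]
        refine measure_union_null (hnsp i j h).1 ?_
        exact (hnsp j i (fun he => h he.symm)).2
    have hsum := measure_add_measure_compl (μ := f i) (hCmeas i)
    rw [hcompl, add_zero, measure_univ] at hsum
    exact hsum
  set A : ℕ → Set Ω := fun n => ⋃ m, C (n + m) with hAdef
  have hAmeas : ∀ n, MeasurableSet (A n) := fun n => MeasurableSet.iUnion (fun m => hCmeas _)
  have hAanti : Antitone A := by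
    refine antitone_nat_of_succ_le (fun n => ?_)
    simp only [hAdef]
    refine Set.iUnion_subset (fun m => ?_)
    have he : n + 1 + m = n + (1 + m) := by omega
    rw [he]
    exact Set.subset_iUnion (fun m => C (n + m)) (1 + m)
  have hAempty : (⋂ n, A n) = ∅ := by
    rw [Set.eq_empty_iff_forall_notMem]
    intro x hx
    rw [Set.mem_iInter] at hx
    obtain ⟨m₀, hm₀⟩ := Set.mem_iUnion.mp (hx 0)
    obtain ⟨m₁, hm₁⟩ := Set.mem_iUnion.mp (hx (m₀ + 1))
    exact hCdisj (0 + m₀) (m₀ + 1 + m₁) (by omega) x hm₀ hm₁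
  have htend := hcont A hAmeas hAanti hAempty
  obtain ⟨n, hn⟩ := (htend.eventually (gt_mem_nhds (zero_lt_one (α := ENNReal)))).exists
  have hge : (1 : ENNReal) ≤ ⨆ P : Θ, P.1 (A n) := by
    have hsub : C n ⊆ A n := by
      simp only [hAdef]
      exact Set.subset_iUnion_of_subset 0 (by rw [Nat.add_zero])
    calc (1 : ENNReal) = f n (C n) := (hCfull n).symm
    _ ≤ f n (A n) := measure_mono hsub
    _ ≤ ⨆ P : Θ, P.1 (A n) := le_iSup (fun P : Θ => P.1 (A n)) ⟨f n, hfΘ n⟩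
  exact absurd hn (not_lt.mpr hge)
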